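/- arXiv:2311.17542 — 4 statements merged into one kernel-verified Lean document; each statement's English description precedes it below -/
import Mathlib

section
/- Let M > 0 and let θ₁, θ₂ : ℝ → ℝ be continuously differentiable functions with |θ_i(x)| ≤ M for all x ∈ [0,1] and i = 1,2. Then (∫₀¹ |e^{θ₁(x)} − e^{θ₂(x)}|² dx)^{1/2} + (∫₀¹ |e^{θ₁(x)}θ₁′(x) − e^{θ₂(x)}θ₂′(x)|² dx)^{1/2} ≤ e^M (1 + (∫₀¹ |θ₁′(x)|² dx)^{1/2}) ( sup_{x∈[0,1]} |θ₁(x) − θ₂(x)| + (∫₀¹ |θ₁′(x) − θ₂′(x)|² dx)^{1/2} ). -/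
open MeasureTheory Set intervalIntegral

private lemma aux_exp_lip (a b : ℝ) : |Real.exp a - Real.exp b| ≤ Real.exp (max a b) * |a - b| := by
  rcases le_total b a with h | h
  · rw [max_eq_left h, abs_of_nonneg (sub_nonneg.2 (Real.exp_le_exp.2 h)),
      abs_of_nonneg (sub_nonneg.2 h)]
    have h1 := Real.add_one_le_exp (b - a)
    have h2 := Real.exp_pos a
    have h3 : Real.exp b = Real.exp a * Real.exp (b - a) := by
      rw [← Real.exp_add]; ring_nf
    nlinarith
  · rw [max_eq_right h, abs_of_nonpos (sub_nonpos.2 (Real.exp_le_exp.2 h)),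
      abs_of_nonpos (sub_nonpos.2 h)]
    have h1 := Real.add_one_le_exp (a - b)
    have h2 := Real.exp_pos b
    have h3 : Real.exp a = Real.exp b * Real.exp (a - b) := by
      rw [← Real.exp_add]; ring_nf
    nlinarith

private lemma aux_memL2 (f : ℝ → ℝ) (hf : Continuous f) :
    MemLp f (ENNReal.ofReal 2) (volume.restrict (Set.Ioc (0 : ℝ) 1)) := by
  haveI : IsFiniteMeasure (volume.restrict (Set.Ioc (0 : ℝ) 1)) := by
    constructor
    rw [Measure.restrict_apply_univ, Real.volume_Ioc]
    exact ENNReal.ofReal_lt_top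
  obtain ⟨C, hC⟩ := isCompact_Icc.exists_bound_of_continuousOn
    (hf.continuousOn : ContinuousOn f (Set.Icc (0 : ℝ) 1))
  refine MemLp.of_bound hf.aestronglyMeasurable.restrict C ?_
  refine (ae_restrict_iff' measurableSet_Ioc).2 (ae_of_all _ fun x hx => ?_)
  exact hC x (Set.Ioc_subset_Icc_self hx)

private lemma aux_cs (f g : ℝ → ℝ) (hf : Continuous f) (hg : Continuous g)
    (hf0 : ∀ x, 0 ≤ f x) (hg0 : ∀ x, 0 ≤ g x) :
    ∫ x in (0 : ℝ)..1, f x * g x ≤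
      Real.sqrt (∫ x in (0 : ℝ)..1, f x ^ 2) * Real.sqrt (∫ x in (0 : ℝ)..1, g x ^ 2) := by
  rw [intervalIntegral.integral_of_le zero_le_one, intervalIntegral.integral_of_le zero_le_one,
    intervalIntegral.integral_of_le zero_le_one]
  have hpq : Real.HolderConjugate 2 2 := ⟨by norm_num, by norm_num, by norm_num⟩
  have h := integral_mul_le_Lp_mul_Lq_of_nonneg (μ := volume.restrict (Set.Ioc (0 : ℝ) 1)) hpq
    (ae_of_all _ hf0) (ae_of_all _ hg0) (aux_memL2 f hf) (aux_memL2 g hg)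
  simp only [Real.rpow_two] at h
  calc ∫ x in Set.Ioc (0:ℝ) 1, f x * g x
      ≤ (∫ x in Set.Ioc (0:ℝ) 1, f x ^ 2) ^ (1/2 : ℝ) *
        (∫ x in Set.Ioc (0:ℝ) 1, g x ^ 2) ^ (1/2 : ℝ) := h
    _ = _ := by rw [← Real.sqrt_eq_rpow, ← Real.sqrt_eq_rpow]

/-- Local Lipschitz estimate for `θ ↦ e^θ` in the `H¹`-type norm on `[0,1]`: for `C¹`
functions `θ₁, θ₂` bounded by `M` on `[0,1]`,
`‖e^{θ₁}-e^{θ₂}‖_{L²} + ‖(e^{θ₁})'-(e^{θ₂})'‖_{L²}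
  ≤ e^M (1+‖θ₁'‖_{L²})(‖θ₁-θ₂‖_∞ + ‖θ₁'-θ₂'‖_{L²})`. -/
theorem stmt_11 (M : ℝ) (hM : 0 < M) (θ₁ θ₂ : ℝ → ℝ)
    (h₁ : ContDiff ℝ 1 θ₁) (h₂ : ContDiff ℝ 1 θ₂)
    (hb₁ : ∀ x ∈ Set.Icc (0 : ℝ) 1, |θ₁ x| ≤ M)
    (hb₂ : ∀ x ∈ Set.Icc (0 : ℝ) 1, |θ₂ x| ≤ M) :
    Real.sqrt (∫ x in (0 : ℝ)..1, |Real.exp (θ₁ x) - Real.exp (θ₂ x)| ^ 2) +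
      Real.sqrt (∫ x in (0 : ℝ)..1,
        |Real.exp (θ₁ x) * deriv θ₁ x - Real.exp (θ₂ x) * deriv θ₂ x| ^ 2) ≤
    Real.exp M * (1 + Real.sqrt (∫ x in (0 : ℝ)..1, |deriv θ₁ x| ^ 2)) *
      ((⨆ x ∈ Set.Icc (0 : ℝ) 1, |θ₁ x - θ₂ x|) +
        Real.sqrt (∫ x in (0 : ℝ)..1, |deriv θ₁ x - deriv θ₂ x| ^ 2)) := by
  have hc₁ : Continuous θ₁ := h₁.continuous
  have hc₂ : Continuous θ₂ := h₂.continuous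
  have hd₁ : Continuous (deriv θ₁) := h₁.continuous_deriv le_rfl
  have hd₂ : Continuous (deriv θ₂) := h₂.continuous_deriv le_rfl
  set S : ℝ := ⨆ x ∈ Set.Icc (0 : ℝ) 1, |θ₁ x - θ₂ x| with hSdef
  set A : ℝ := Real.sqrt (∫ x in (0 : ℝ)..1, |deriv θ₁ x| ^ 2) with hAdef
  set D : ℝ := Real.sqrt (∫ x in (0 : ℝ)..1, |deriv θ₁ x - deriv θ₂ x| ^ 2) with hDdef
  -- supremum facts
  have hbdd : BddAbove (Set.range fun x => ⨆ _ : x ∈ Set.Icc (0 : ℝ) 1, |θ₁ x - θ₂ x|) := by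
    refine ⟨2 * M, ?_⟩
    rintro _ ⟨x, rfl⟩
    refine Real.iSup_le (fun hx => ?_) (by linarith)
    calc |θ₁ x - θ₂ x| ≤ |θ₁ x| + |θ₂ x| := abs_sub _ _
      _ ≤ 2 * M := by have := hb₁ x hx; have := hb₂ x hx; linarith
  have hSle : ∀ x ∈ Set.Icc (0 : ℝ) 1, |θ₁ x - θ₂ x| ≤ S := by
    intro x hx
    have h := le_ciSup hbdd x
    rwa [ciSup_pos hx] at h
  have hS0 : 0 ≤ S := le_trans (abs_nonneg _) (hSle 0 (by norm_num))
  have hA0 : 0 ≤ A := Real.sqrt_nonneg _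
  have hD0 : 0 ≤ D := Real.sqrt_nonneg _
  have hE := Real.exp_pos M
  -- first term
  have key1 : ∀ x ∈ Set.Icc (0 : ℝ) 1, |Real.exp (θ₁ x) - Real.exp (θ₂ x)| ≤
      Real.exp M * |θ₁ x - θ₂ x| := by
    intro x hx
    refine (aux_exp_lip _ _).trans ?_
    have hmax : max (θ₁ x) (θ₂ x) ≤ M := by
      have h1 := (abs_le.1 (hb₁ x hx)).2
      have h2 := (abs_le.1 (hb₂ x hx)).2
      exact max_le h1 h2
    exact mul_le_mul_of_nonneg_right (Real.exp_le_exp.2 hmax) (abs_nonneg _)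
  have T1 : Real.sqrt (∫ x in (0 : ℝ)..1, |Real.exp (θ₁ x) - Real.exp (θ₂ x)| ^ 2) ≤
      Real.exp M * S := by
    have hmono : (∫ x in (0 : ℝ)..1, |Real.exp (θ₁ x) - Real.exp (θ₂ x)| ^ 2) ≤
        ∫ _x in (0 : ℝ)..1, (Real.exp M * S) ^ 2 := by
      refine intervalIntegral.integral_mono_on zero_le_one ?_ ?_ ?_
      · exact (((hc₁.rexp.sub hc₂.rexp).abs.pow 2)).intervalIntegrable _ _
      · exact intervalIntegrable_const
      · intro x hx
        have h := (key1 x hx).trans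
          (mul_le_mul_of_nonneg_left (hSle x hx) (le_of_lt hE))
        exact pow_le_pow_left₀ (abs_nonneg _) h 2
    rw [intervalIntegral.integral_const] at hmono
    simp only [sub_zero, one_smul] at hmono
    calc Real.sqrt (∫ x in (0 : ℝ)..1, |Real.exp (θ₁ x) - Real.exp (θ₂ x)| ^ 2)
        ≤ Real.sqrt ((Real.exp M * S) ^ 2) := Real.sqrt_le_sqrt hmono
      _ = Real.exp M * S := Real.sqrt_sq (by positivity)
  -- second term
  have key2 : ∀ x ∈ Set.Icc (0 : ℝ) 1,
      |Real.exp (θ₁ x) * deriv θ₁ x - Real.exp (θ₂ x) * deriv θ₂ x| ≤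
      Real.exp M * |deriv θ₁ x - deriv θ₂ x| + Real.exp M * S * |deriv θ₁ x| := by
    intro x hx
    have hsplit : Real.exp (θ₁ x) * deriv θ₁ x - Real.exp (θ₂ x) * deriv θ₂ x =
        Real.exp (θ₂ x) * (deriv θ₁ x - deriv θ₂ x) +
        (Real.exp (θ₁ x) - Real.exp (θ₂ x)) * deriv θ₁ x := by ring
    rw [hsplit]
    refine (abs_add_le _ _).trans ?_
    rw [abs_mul, abs_mul]
    have h2 : |Real.exp (θ₂ x)| ≤ Real.exp M := by
      rw [abs_of_pos (Real.exp_pos _)]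
      exact Real.exp_le_exp.2 (abs_le.1 (hb₂ x hx)).2
    have h3 : |Real.exp (θ₁ x) - Real.exp (θ₂ x)| ≤ Real.exp M * S :=
      (key1 x hx).trans (mul_le_mul_of_nonneg_left (hSle x hx) (le_of_lt hE))
    have := mul_le_mul_of_nonneg_right h2 (abs_nonneg (deriv θ₁ x - deriv θ₂ x))
    have := mul_le_mul_of_nonneg_right h3 (abs_nonneg (deriv θ₁ x))
    linarith
  have hD2 : D ^ 2 = ∫ x in (0 : ℝ)..1, |deriv θ₁ x - deriv θ₂ x| ^ 2 := by
    rw [hDdef]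
    exact Real.sq_sqrt (intervalIntegral.integral_nonneg zero_le_one fun x _ => by positivity)
  have hA2 : A ^ 2 = ∫ x in (0 : ℝ)..1, |deriv θ₁ x| ^ 2 := by
    rw [hAdef]
    exact Real.sq_sqrt (intervalIntegral.integral_nonneg zero_le_one fun x _ => by positivity)
  have hCS : (∫ x in (0 : ℝ)..1, |deriv θ₁ x - deriv θ₂ x| * |deriv θ₁ x|) ≤ D * A := by
    exact aux_cs _ _ ((hd₁.sub hd₂).abs) hd₁.abs (fun x => abs_nonneg _) (fun x => abs_nonneg _)
  have T2 : Real.sqrt (∫ x in (0 : ℝ)..1,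
      |Real.exp (θ₁ x) * deriv θ₁ x - Real.exp (θ₂ x) * deriv θ₂ x| ^ 2) ≤
      Real.exp M * (D + S * A) := by
    have hmono : (∫ x in (0 : ℝ)..1,
        |Real.exp (θ₁ x) * deriv θ₁ x - Real.exp (θ₂ x) * deriv θ₂ x| ^ 2) ≤
        ∫ x in (0 : ℝ)..1,
          (Real.exp M * |deriv θ₁ x - deriv θ₂ x| + Real.exp M * S * |deriv θ₁ x|) ^ 2 := by
      refine intervalIntegral.integral_mono_on zero_le_one ?_ ?_ ?_
      · exact (((hc₁.rexp.mul hd₁).sub (hc₂.rexp.mul hd₂)).abs.pow 2).intervalIntegrable _ _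
      · exact ((((continuous_const.mul (hd₁.sub hd₂).abs).add
          (continuous_const.mul hd₁.abs))).pow 2).intervalIntegrable _ _
      · intro x hx
        exact pow_le_pow_left₀ (abs_nonneg _) (key2 x hx) 2
    have hexpand : (∫ x in (0 : ℝ)..1,
        (Real.exp M * |deriv θ₁ x - deriv θ₂ x| + Real.exp M * S * |deriv θ₁ x|) ^ 2) =
        Real.exp M ^ 2 * (∫ x in (0 : ℝ)..1, |deriv θ₁ x - deriv θ₂ x| ^ 2) +
        (2 * Real.exp M ^ 2 * S) *
          (∫ x in (0 : ℝ)..1, |deriv θ₁ x - deriv θ₂ x| * |deriv θ₁ x|) +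
        (Real.exp M ^ 2 * S ^ 2) * (∫ x in (0 : ℝ)..1, |deriv θ₁ x| ^ 2) := by
      rw [← intervalIntegral.integral_const_mul, ← intervalIntegral.integral_const_mul,
        ← intervalIntegral.integral_const_mul, ← intervalIntegral.integral_add, ←
        intervalIntegral.integral_add]
      · exact intervalIntegral.integral_congr fun x _ => by ring
      · exact ((continuous_const.mul ((hd₁.sub hd₂).abs.pow 2)).add
          (continuous_const.mul ((hd₁.sub hd₂).abs.mul hd₁.abs))).intervalIntegrable _ _
      · exact (continuous_const.mul (hd₁.abs.pow 2)).intervalIntegrable _ _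
      · exact (continuous_const.mul ((hd₁.sub hd₂).abs.pow 2)).intervalIntegrable _ _
      · exact (continuous_const.mul ((hd₁.sub hd₂).abs.mul hd₁.abs)).intervalIntegrable _ _
    have hfinal : (∫ x in (0 : ℝ)..1,
        |Real.exp (θ₁ x) * deriv θ₁ x - Real.exp (θ₂ x) * deriv θ₂ x| ^ 2) ≤
        (Real.exp M * (D + S * A)) ^ 2 := by
      rw [hexpand] at hmono
      rw [← hD2, ← hA2] at hmono
      have hI : 2 * Real.exp M ^ 2 * S *
          (∫ x in (0 : ℝ)..1, |deriv θ₁ x - deriv θ₂ x| * |deriv θ₁ x|) ≤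
          2 * Real.exp M ^ 2 * S * (D * A) :=
        mul_le_mul_of_nonneg_left hCS (by positivity)
      nlinarith [hI]
    calc Real.sqrt (∫ x in (0 : ℝ)..1,
        |Real.exp (θ₁ x) * deriv θ₁ x - Real.exp (θ₂ x) * deriv θ₂ x| ^ 2)
        ≤ Real.sqrt ((Real.exp M * (D + S * A)) ^ 2) := Real.sqrt_le_sqrt hfinal
      _ = Real.exp M * (D + S * A) := Real.sqrt_sq (by positivity)
  calc Real.sqrt (∫ x in (0 : ℝ)..1, |Real.exp (θ₁ x) - Real.exp (θ₂ x)| ^ 2) +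
      Real.sqrt (∫ x in (0 : ℝ)..1,
        |Real.exp (θ₁ x) * deriv θ₁ x - Real.exp (θ₂ x) * deriv θ₂ x| ^ 2)
      ≤ Real.exp M * S + Real.exp M * (D + S * A) := add_le_add T1 T2
    _ ≤ Real.exp M * (1 + A) * (S + D) := by nlinarith [mul_nonneg hA0 hD0]
end

section
/- Let r > 0 and M₀ > 0. Let (f_k)_{k∈ℤ} be real numbers with Σ_{k∈ℤ} f_k² e^{r k²} ≤ M₀², and define f : ℝ → ℝ by f(x) = f₀/√(2π) + (1/√π) Σ_{k≥1} ( f_k cos(kx) + f_{-k} sin(kx) ). Then there exists a constant M > 0 depending only on r and M₀ such that f is smooth, sup_{x∈ℝ} |f(x)| ≤ M, and for every n ∈ ℕ and every x ∈ ℝ, the n-th derivative of the function x ↦ e^{f(x)} satisfies |(d/dx)^n e^{f(x)}| ≤ M · n! · M^n. -/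
open Complex Metric Real in
/-- `‖cos z‖ ≤ e^{|Im z|}`. -/
lemma aux_norm_cos_le (z : ℂ) : ‖Complex.cos z‖ ≤ Real.exp |z.im| := by
  rw [Complex.cos_eq, ← Complex.ofReal_cos, ← Complex.ofReal_cosh, ← Complex.ofReal_sin,
    ← Complex.ofReal_sinh, ← Real.cosh_add_sinh]
  refine (norm_sub_le _ _).trans ?_
  simp only [norm_mul, Complex.norm_real, Complex.norm_I, mul_one, Real.norm_eq_abs]
  have h1 : |Real.cos z.re| * |Real.cosh z.im| ≤ Real.cosh |z.im| := by
    rw [Real.cosh_abs, abs_of_pos (Real.cosh_pos z.im)]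
    exact mul_le_of_le_one_left (Real.cosh_pos z.im).le (Real.abs_cos_le_one _)
  have h2 : |Real.sin z.re| * |Real.sinh z.im| ≤ Real.sinh |z.im| := by
    rw [← Real.abs_sinh]
    exact mul_le_of_le_one_left (abs_nonneg _) (Real.abs_sin_le_one _)
  linarith

open Complex Metric Real in
/-- `‖sin z‖ ≤ e^{|Im z|}`. -/
lemma aux_norm_sin_le (z : ℂ) : ‖Complex.sin z‖ ≤ Real.exp |z.im| := by
  rw [Complex.sin_eq, ← Complex.ofReal_cos, ← Complex.ofReal_cosh, ← Complex.ofReal_sin,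
    ← Complex.ofReal_sinh, ← Real.cosh_add_sinh]
  refine (norm_add_le _ _).trans ?_
  simp only [norm_mul, Complex.norm_real, Complex.norm_I, mul_one, Real.norm_eq_abs]
  have h1 : |Real.sin z.re| * |Real.cosh z.im| ≤ Real.cosh |z.im| := by
    rw [Real.cosh_abs, abs_of_pos (Real.cosh_pos z.im)]
    exact mul_le_of_le_one_left (Real.cosh_pos z.im).le (Real.abs_sin_le_one _)
  have h2 : |Real.cos z.re| * |Real.sinh z.im| ≤ Real.sinh |z.im| := by
    rw [← Real.abs_sinh]
    exact mul_le_of_le_one_left (abs_nonneg _) (Real.abs_cos_le_one _)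
  linarith

/-- Gaussian-type series are summable. -/
lemma aux_summable_exp_quad (a b : ℝ) (hb : 0 < b) :
    Summable (fun k : ℕ => Real.exp (a * k - b * k ^ 2)) := by
  have hgeom : Summable (fun k : ℕ => Real.exp ((a + 1) ^ 2 / (4 * b)) * Real.exp (-1) ^ k) :=
    (summable_geometric_of_lt_one (Real.exp_nonneg _)
      (by rw [Real.exp_lt_one_iff]; norm_num)).mul_left _
  refine Summable.of_nonneg_of_le (fun k => (Real.exp_pos _).le) (fun k => ?_) hgeom
  have hpow : Real.exp (-1 : ℝ) ^ k = Real.exp (-(k : ℝ)) := by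
    rw [← Real.exp_nat_mul]; congr 1; ring
  rw [hpow, ← Real.exp_add]
  apply Real.exp_le_exp.mpr
  have h4b : (0 : ℝ) < 4 * b := by linarith
  have key : (a + 1) ^ 2 / (4 * b) * (4 * b) = (a + 1) ^ 2 := div_mul_cancel₀ _ h4b.ne'
  nlinarith [sq_nonneg (2 * b * (k : ℝ) - (a + 1)), h4b]

open Complex Metric in
/-- Cauchy estimates on the closed unit ball. -/
lemma aux_cauchy_bound {G : ℂ → ℂ} {c : ℂ} {C : ℝ}
    (hG : DifferentiableOn ℂ G (closedBall c 1))
    (hC : ∀ z ∈ closedBall c 1, ‖G z‖ ≤ C) (n : ℕ) :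
    ‖iteratedDeriv n G c‖ ≤ n.factorial * C := by
  have hC0 : 0 ≤ C := (norm_nonneg _).trans (hC c (mem_closedBall_self zero_le_one))
  have hG' : DifferentiableOn ℂ G (closedBall c ((1 : NNReal) : ℝ)) := by
    simpa using hG
  have h := hG'.hasFPowerSeriesOnBall one_pos
  have hfs := h.factorial_smul (1 : ℂ) n
  have hid : iteratedDeriv n G c = iteratedFDeriv ℂ n G c (fun _ => 1) :=
    iteratedDeriv_eq_iteratedFDeriv
  rw [hid, ← hfs]
  set p := cauchyPowerSeries G c ((1 : NNReal) : ℝ) with hp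
  have h1 : ‖(n.factorial) • p n (fun _ => (1 : ℂ))‖
      = (n.factorial : ℝ) * ‖p n (fun _ => (1 : ℂ))‖ := by
    rw [← Nat.cast_smul_eq_nsmul (R := ℂ), norm_smul]
    simp
  rw [h1]
  have h2 : ‖p n (fun _ => (1 : ℂ))‖ ≤ ‖p n‖ := by
    refine (ContinuousMultilinearMap.le_opNorm _ _).trans ?_
    simp
  have hcont : Continuous fun θ : ℝ => ‖G (circleMap c 1 θ)‖ := by
    refine Continuous.norm ?_
    exact hG.continuousOn.comp_continuous (continuous_circleMap c 1)
      (fun θ => sphere_subset_closedBall (circleMap_mem_sphere c zero_le_one θ))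
  have hint : (∫ θ : ℝ in (0)..(2 * Real.pi), ‖G (circleMap c 1 θ)‖) ≤ 2 * Real.pi * C := by
    have hmono := intervalIntegral.integral_mono_on (a := 0) (b := 2 * Real.pi)
      (μ := MeasureTheory.volume)
      (by positivity) (hcont.intervalIntegrable _ _) (intervalIntegrable_const (c := C))
      (fun θ _ => hC _ (sphere_subset_closedBall (circleMap_mem_sphere c zero_le_one θ)))
    simpa [mul_comm] using hmono
  have h3 : ‖p n‖ ≤ C := by
    have := norm_cauchyPowerSeries_le G c ((1 : NNReal) : ℝ) n
    rw [hp]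
    refine this.trans ?_
    have hpi : (0 : ℝ) < 2 * Real.pi := by positivity
    simp only [NNReal.coe_one, abs_one, inv_one, one_pow, mul_one]
    calc (2 * Real.pi)⁻¹ * ∫ θ : ℝ in (0)..(2 * Real.pi), ‖G (circleMap c 1 θ)‖
        ≤ (2 * Real.pi)⁻¹ * (2 * Real.pi * C) := by
          apply mul_le_mul_of_nonneg_left _ (by positivity)
          simpa using hint
      _ = C := by field_simp
  calc (n.factorial : ℝ) * ‖p n (fun _ => (1 : ℂ))‖ ≤ (n.factorial : ℝ) * ‖p n‖ := by
        exact mul_le_mul_of_nonneg_left h2 (by positivity)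
    _ ≤ n.factorial * C := mul_le_mul_of_nonneg_left h3 (by positivity)

open Complex in
/-- Transfer of iterated derivatives from a holomorphic function to its real restriction. -/
lemma aux_iteratedDeriv_ofReal {U : Set ℂ} (hU : IsOpen U) (hUR : ∀ x : ℝ, (x : ℂ) ∈ U) :
    ∀ (n : ℕ) (G : ℂ → ℂ) (g : ℝ → ℝ), AnalyticOnNhd ℂ G U → (∀ x : ℝ, ((g x : ℝ) : ℂ) = G x) →
      ∀ x : ℝ, ((iteratedDeriv n g x : ℝ) : ℂ) = iteratedDeriv n G x := by
  intro n
  induction n with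
  | zero => intro G g _ hre x; simpa using hre x
  | succ n ih =>
    intro G g hG hre x
    rw [iteratedDeriv_succ', iteratedDeriv_succ']
    refine ih (deriv G) (deriv g) hG.deriv ?_ x
    intro t
    have hc : HasDerivAt G (deriv G ↑t) ↑t := (hG ↑t (hUR t)).differentiableAt.hasDerivAt
    have h1 : HasDerivAt (fun s : ℝ => G ↑s) (deriv G ↑t) t := hc.comp_ofReal
    have h2 : (fun s : ℝ => G ↑s) = fun s : ℝ => ((g s : ℝ) : ℂ) :=
      funext fun s => (hre s).symm
    rw [h2] at h1
    have h4 : HasDerivAt g (deriv G ↑t).re t := by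
      have := (Complex.reCLM.hasFDerivAt (x := ((g t : ℝ) : ℂ))).comp_hasDerivAt t h1
      simpa [Function.comp_def] using this
    have h5 : HasDerivAt (fun s : ℝ => ((g s : ℝ) : ℂ)) (((deriv G ↑t).re : ℝ) : ℂ) t := by
      have := (Complex.ofRealCLM.hasFDerivAt (x := g t)).comp_hasDerivAt t h4
      simpa [Function.comp_def] using this
    have h6 : (((deriv G ↑t).re : ℝ) : ℂ) = deriv G ↑t := h5.unique h1
    rw [h4.deriv, h6]

/-- The 2π-periodic function with real trigonometric coefficients `fc : ℤ → ℝ`: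
`f(x) = fc 0/√(2π) + (1/√π) ∑_{k≥1} (fc k · cos(kx) + fc (-k) · sin(kx))`. -/
noncomputable def trigSeries (fc : ℤ → ℝ) (x : ℝ) : ℝ :=
  fc 0 / Real.sqrt (2 * Real.pi) +
    (1 / Real.sqrt Real.pi) *
      ∑' k : ℕ, (fc ((k : ℤ) + 1) * Real.cos (((k : ℝ) + 1) * x) +
        fc (-((k : ℤ) + 1)) * Real.sin (((k : ℝ) + 1) * x))

set_option maxHeartbeats 2000000 in
/-- Lemma C.1(iii) in the real trigonometric basis: there is `M = M(r, M₀) > 0` such that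
every `f` in the `M₀`-ball of `A_r` (i.e. `∑ f_k² e^{rk²} ≤ M₀²`) is smooth, bounded by `M`,
and the derivatives of `e^f` satisfy `|∂ⁿ e^f| ≤ M · n! · Mⁿ`; that is, `f ∈ R₂(M)`. -/
theorem stmt_12 (r M₀ : ℝ) (hr : 0 < r) (hM₀ : 0 < M₀) :
    ∃ M : ℝ, 0 < M ∧
      ∀ fc : ℤ → ℝ,
        Summable (fun k : ℤ => (fc k) ^ 2 * Real.exp (r * (k : ℝ) ^ 2)) →
        (∑' k : ℤ, (fc k) ^ 2 * Real.exp (r * (k : ℝ) ^ 2)) ≤ M₀ ^ 2 →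
        ContDiff ℝ (⊤ : ℕ∞) (trigSeries fc) ∧
        (∀ x : ℝ, |trigSeries fc x| ≤ M) ∧
        ∀ (n : ℕ) (x : ℝ),
          |iteratedDeriv n (fun y : ℝ => Real.exp (trigSeries fc y)) x| ≤
            M * n.factorial * M ^ n := by
  have hπ := Real.pi_pos
  -- the weight sequence
  set u : ℕ → ℝ := fun k =>
    2 * M₀ * Real.exp (2 * ((k : ℝ) + 1) - r / 2 * ((k : ℝ) + 1) ^ 2) with hu_def
  have hqs : Summable (fun k : ℕ =>
      Real.exp (2 * ((k : ℝ) + 1) - r / 2 * ((k : ℝ) + 1) ^ 2)) := by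
    have hrw : (fun k : ℕ => Real.exp (2 * ((k : ℝ) + 1) - r / 2 * ((k : ℝ) + 1) ^ 2))
        = fun k : ℕ => Real.exp (2 - r / 2) *
          Real.exp ((2 - r) * (k : ℝ) - r / 2 * (k : ℝ) ^ 2) := by
      funext k; rw [← Real.exp_add]; congr 1; ring
    rw [hrw]
    exact (aux_summable_exp_quad (2 - r) (r / 2) (by linarith)).mul_left _
  have hu : Summable u := hqs.mul_left _
  set B : ℝ := M₀ / Real.sqrt (2 * Real.pi) + (1 / Real.sqrt Real.pi) * ∑' k, u k with hB_def
  have htsum_u_nonneg : 0 ≤ ∑' k, u k :=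
    tsum_nonneg fun k => by positivity
  have hB : 0 < B := by
    have h1 : 0 < M₀ / Real.sqrt (2 * Real.pi) := by positivity
    have h2 : 0 ≤ (1 / Real.sqrt Real.pi) * ∑' k, u k := by positivity
    rw [hB_def]; linarith
  set M : ℝ := B + Real.exp B with hM_def
  have hM1 : (1 : ℝ) ≤ M := by
    have := Real.add_one_le_exp B
    rw [hM_def]; linarith
  refine ⟨M, by linarith, ?_⟩
  intro fc hsum htsum
  -- coefficient bound
  have hcoef : ∀ k : ℤ, |fc k| ≤ M₀ * Real.exp (-(r / 2) * (k : ℝ) ^ 2) := by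
    intro k
    have h1 : (fc k) ^ 2 * Real.exp (r * (k : ℝ) ^ 2) ≤ M₀ ^ 2 :=
      le_trans (hsum.le_tsum k fun j _ => by positivity) htsum
    have hek : 0 < Real.exp (r * (k : ℝ) ^ 2) := Real.exp_pos _
    have h2 : (fc k) ^ 2 ≤ (M₀ * Real.exp (-(r / 2) * (k : ℝ) ^ 2)) ^ 2 := by
      have hsq : (M₀ * Real.exp (-(r / 2) * (k : ℝ) ^ 2)) ^ 2
          = M₀ ^ 2 * Real.exp (-(r * (k : ℝ) ^ 2)) := by
        have e1 : Real.exp (-(r / 2) * (k : ℝ) ^ 2) ^ 2 = Real.exp (-(r * (k : ℝ) ^ 2)) := by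
          rw [pow_two, ← Real.exp_add]; congr 1; ring
        rw [mul_pow, e1]
      rw [hsq]
      have := (le_div_iff₀ hek).mpr h1
      rwa [div_eq_mul_inv, ← Real.exp_neg] at this
    have h3 := Real.sqrt_le_sqrt h2
    rwa [Real.sqrt_sq_eq_abs, Real.sqrt_sq (by positivity)] at h3
  -- the strip
  set U : Set ℂ := {z : ℂ | |z.im| < 2} with hU_def
  have hUopen : IsOpen U := by
    have : U = Complex.im ⁻¹' Set.Ioo (-2) 2 := by
      ext z; simp [hU_def, abs_lt]
    rw [this]
    exact isOpen_Ioo.preimage Complex.continuous_im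
  have hUR : ∀ x : ℝ, (x : ℂ) ∈ U := fun x => by
    simp [hU_def]
  -- the terms
  set T : ℕ → ℂ → ℂ := fun k z =>
    (fc ((k : ℤ) + 1) : ℂ) * Complex.cos ((((k : ℝ) + 1) : ℂ) * z) +
      (fc (-((k : ℤ) + 1)) : ℂ) * Complex.sin ((((k : ℝ) + 1) : ℂ) * z) with hT_def
  have hTdiff : ∀ k, DifferentiableOn ℂ (T k) U := by
    intro k
    apply DifferentiableOn.add
    · exact ((Complex.differentiable_cos.comp
        (differentiable_id.const_mul _)).const_mul _).differentiableOn
    · exact ((Complex.differentiable_sin.comp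
        (differentiable_id.const_mul _)).const_mul _).differentiableOn
  have hc1 : ∀ k : ℕ, |fc ((k : ℤ) + 1)| ≤ M₀ * Real.exp (-(r / 2) * ((k : ℝ) + 1) ^ 2) := by
    intro k
    have h := hcoef ((k : ℤ) + 1)
    have e : (((k : ℤ) + 1 : ℤ) : ℝ) ^ 2 = ((k : ℝ) + 1) ^ 2 := by push_cast; ring
    rw [e] at h; exact h
  have hc2 : ∀ k : ℕ, |fc (-((k : ℤ) + 1))| ≤ M₀ * Real.exp (-(r / 2) * ((k : ℝ) + 1) ^ 2) := by
    intro k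
    have h := hcoef (-((k : ℤ) + 1))
    have e : ((-((k : ℤ) + 1) : ℤ) : ℝ) ^ 2 = ((k : ℝ) + 1) ^ 2 := by push_cast; ring
    rw [e] at h; exact h
  have hTbound : ∀ (k : ℕ), ∀ z ∈ U, ‖T k z‖ ≤ u k := by
    intro k z hz
    have hz2 : |z.im| < 2 := hz
    have him : |((((k : ℝ) + 1) : ℂ) * z).im| ≤ 2 * ((k : ℝ) + 1) := by
      have he : ((((k : ℝ) + 1) : ℂ) * z).im = ((k : ℝ) + 1) * z.im := by
        simp [Complex.mul_im]
      rw [he, abs_mul, abs_of_nonneg (by positivity : (0:ℝ) ≤ (k : ℝ) + 1)]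
      nlinarith [abs_nonneg z.im, Nat.cast_nonneg (α := ℝ) k]
    have hcos : ‖Complex.cos ((((k : ℝ) + 1) : ℂ) * z)‖ ≤ Real.exp (2 * ((k : ℝ) + 1)) :=
      (aux_norm_cos_le _).trans (Real.exp_le_exp.mpr him)
    have hsin : ‖Complex.sin ((((k : ℝ) + 1) : ℂ) * z)‖ ≤ Real.exp (2 * ((k : ℝ) + 1)) :=
      (aux_norm_sin_le _).trans (Real.exp_le_exp.mpr him)
    have key : Real.exp (-(r / 2) * ((k : ℝ) + 1) ^ 2) * Real.exp (2 * ((k : ℝ) + 1))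
        = Real.exp (2 * ((k : ℝ) + 1) - r / 2 * ((k : ℝ) + 1) ^ 2) := by
      rw [← Real.exp_add]; congr 1; ring
    calc ‖T k z‖ ≤ ‖(fc ((k : ℤ) + 1) : ℂ) * Complex.cos ((((k : ℝ) + 1) : ℂ) * z)‖ +
          ‖(fc (-((k : ℤ) + 1)) : ℂ) * Complex.sin ((((k : ℝ) + 1) : ℂ) * z)‖ :=
        norm_add_le _ _
      _ ≤ (M₀ * Real.exp (-(r / 2) * ((k : ℝ) + 1) ^ 2)) * Real.exp (2 * ((k : ℝ) + 1)) +
          (M₀ * Real.exp (-(r / 2) * ((k : ℝ) + 1) ^ 2)) * Real.exp (2 * ((k : ℝ) + 1)) := by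
        rw [norm_mul, norm_mul, Complex.norm_real, Complex.norm_real,
          Real.norm_eq_abs, Real.norm_eq_abs]
        exact add_le_add
          (mul_le_mul (hc1 k) hcos (norm_nonneg _) (by positivity))
          (mul_le_mul (hc2 k) hsin (norm_nonneg _) (by positivity))
      _ = u k := by
        have e2 : (M₀ * Real.exp (-(r / 2) * ((k : ℝ) + 1) ^ 2)) * Real.exp (2 * ((k : ℝ) + 1))
            = M₀ * Real.exp (2 * ((k : ℝ) + 1) - r / 2 * ((k : ℝ) + 1) ^ 2) := by
          rw [mul_assoc, key]
        rw [e2]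
        simp only [hu_def]
        ring
  -- the holomorphic extension
  set F : ℂ → ℂ := fun z =>
    ((fc 0 / Real.sqrt (2 * Real.pi) : ℝ) : ℂ) +
      ((1 / Real.sqrt Real.pi : ℝ) : ℂ) * ∑' k : ℕ, T k z with hF_def
  have hsum_diff : DifferentiableOn ℂ (fun z => ∑' k : ℕ, T k z) U :=
    Complex.differentiableOn_tsum_of_summable_norm hu hTdiff hUopen hTbound
  have hFdiff : DifferentiableOn ℂ F U :=
    (differentiableOn_const _).add (hsum_diff.const_mul _)
  -- bound for F on the strip
  have hFbound : ∀ z ∈ U, ‖F z‖ ≤ B := by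
    intro z hz
    have hsT : Summable fun k => ‖T k z‖ :=
      Summable.of_nonneg_of_le (fun _ => norm_nonneg _) (fun k => hTbound k z hz) hu
    have h3 : ‖∑' k : ℕ, T k z‖ ≤ ∑' k, u k :=
      (norm_tsum_le_tsum_norm hsT).trans (Summable.tsum_le_tsum (fun k => hTbound k z hz) hsT hu)
    have h4 : ‖((fc 0 / Real.sqrt (2 * Real.pi) : ℝ) : ℂ)‖ ≤ M₀ / Real.sqrt (2 * Real.pi) := by
      rw [Complex.norm_real, Real.norm_eq_abs, abs_div,
        abs_of_nonneg (Real.sqrt_nonneg _)]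
      have h0 : |fc 0| ≤ M₀ := by simpa using hcoef 0
      gcongr
    have h5 : ‖((1 / Real.sqrt Real.pi : ℝ) : ℂ)‖ = 1 / Real.sqrt Real.pi := by
      rw [Complex.norm_real, Real.norm_eq_abs, abs_of_nonneg (by positivity)]
    have h6 : ‖F z‖ ≤ ‖((fc 0 / Real.sqrt (2 * Real.pi) : ℝ) : ℂ)‖ +
        ‖((1 / Real.sqrt Real.pi : ℝ) : ℂ)‖ * ‖∑' k : ℕ, T k z‖ := by
      simp only [hF_def]
      refine (norm_add_le _ _).trans ?_
      rw [norm_mul]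
    rw [h5] at h6
    have h7 := mul_le_mul_of_nonneg_left h3
      (by positivity : (0:ℝ) ≤ 1 / Real.sqrt Real.pi)
    rw [hB_def]
    linarith
  -- F restricted to the reals is trigSeries
  have hreF : ∀ x : ℝ, ((trigSeries fc x : ℝ) : ℂ) = F ↑x := by
    intro x
    have hsummable : Summable fun k : ℕ =>
        fc ((k : ℤ) + 1) * Real.cos (((k : ℝ) + 1) * x) +
          fc (-((k : ℤ) + 1)) * Real.sin (((k : ℝ) + 1) * x) := by
      refine Summable.of_norm_bounded hu fun k => ?_
      have h1 : ‖fc ((k : ℤ) + 1) * Real.cos (((k : ℝ) + 1) * x) +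
          fc (-((k : ℤ) + 1)) * Real.sin (((k : ℝ) + 1) * x)‖
          ≤ |fc ((k : ℤ) + 1)| + |fc (-((k : ℤ) + 1))| := by
        refine (norm_add_le _ _).trans ?_
        rw [Real.norm_eq_abs, Real.norm_eq_abs, abs_mul, abs_mul]
        have := Real.abs_cos_le_one (((k : ℝ) + 1) * x)
        have := Real.abs_sin_le_one (((k : ℝ) + 1) * x)
        nlinarith [abs_nonneg (fc ((k : ℤ) + 1)), abs_nonneg (fc (-((k : ℤ) + 1)))]
      refine h1.trans ?_
      have hexp : Real.exp (-(r / 2) * ((k : ℝ) + 1) ^ 2)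
          ≤ Real.exp (2 * ((k : ℝ) + 1) - r / 2 * ((k : ℝ) + 1) ^ 2) := by
        apply Real.exp_le_exp.mpr
        nlinarith [Nat.cast_nonneg (α := ℝ) k]
      have h6 : M₀ * Real.exp (-(r / 2) * ((k : ℝ) + 1) ^ 2)
          ≤ M₀ * Real.exp (2 * ((k : ℝ) + 1) - r / 2 * ((k : ℝ) + 1) ^ 2) :=
        mul_le_mul_of_nonneg_left hexp hM₀.le
      simp only [hu_def]
      linarith [hc1 k, hc2 k]
    have h1 : ∀ k : ℕ, ((fc ((k : ℤ) + 1) * Real.cos (((k : ℝ) + 1) * x) +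
        fc (-((k : ℤ) + 1)) * Real.sin (((k : ℝ) + 1) * x) : ℝ) : ℂ) = T k ↑x := by
      intro k
      simp only [hT_def]
      push_cast [Complex.ofReal_cos, Complex.ofReal_sin]
      ring
    have h2 := Complex.ofRealCLM.map_tsum hsummable
    simp only [Complex.ofRealCLM_apply] at h2
    simp only [trigSeries, hF_def]
    rw [Complex.ofReal_add, Complex.ofReal_mul, h2]
    congr 1
    congr 1
    exact tsum_congr h1
  -- exp ∘ F
  have hGdiff : DifferentiableOn ℂ (fun z => Complex.exp (F z)) U := hFdiff.cexp
  have hGanalytic : AnalyticOnNhd ℂ (fun z => Complex.exp (F z)) U :=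
    hGdiff.analyticOnNhd hUopen
  have hGb : ∀ z ∈ U, ‖Complex.exp (F z)‖ ≤ Real.exp B := by
    intro z hz
    rw [Complex.norm_exp]
    apply Real.exp_le_exp.mpr
    exact (Complex.re_le_norm _).trans (hFbound z hz)
  refine ⟨?_, ?_, ?_⟩
  · -- smoothness
    have hts : trigSeries fc = fun x : ℝ => (F ↑x).re :=
      funext fun x => by rw [← hreF x, Complex.ofReal_re]
    rw [contDiff_iff_contDiffAt]
    intro x
    rw [hts]
    have hFC : ContDiffAt ℂ ((⊤ : ℕ∞) : WithTop ℕ∞) F ↑x :=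
      (hFdiff.contDiffOn hUopen).contDiffAt (hUopen.mem_nhds (hUR x))
    have h1 : ContDiffAt ℝ ((⊤ : ℕ∞) : WithTop ℕ∞) F ↑x := hFC.restrict_scalars ℝ
    have h2 : ContDiffAt ℝ ((⊤ : ℕ∞) : WithTop ℕ∞) (fun y : ℝ => F ↑y) x :=
      h1.comp x Complex.ofRealCLM.contDiff.contDiffAt
    exact Complex.reCLM.contDiff.contDiffAt.comp x h2
  · -- boundedness
    intro x
    have h := hFbound ↑x (hUR x)
    rw [← hreF x, Complex.norm_real, Real.norm_eq_abs] at h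
    have : (0:ℝ) < Real.exp B := Real.exp_pos _
    rw [hM_def]
    linarith
  · -- derivative bounds
    intro n x
    have hball : Metric.closedBall (↑x : ℂ) 1 ⊆ U := by
      intro z hz
      simp only [Metric.mem_closedBall] at hz
      have h2 : ‖z - ↑x‖ ≤ 1 := by rw [← Complex.dist_eq]; exact hz
      have h3 : |(z - ↑x).im| ≤ 1 := le_trans (Complex.abs_im_le_norm (z - ↑x)) h2
      have h1 : |z.im| ≤ 1 := by simpa using h3
      simp only [hU_def, Set.mem_setOf_eq]
      linarith
    have htrans := aux_iteratedDeriv_ofReal hUopen hUR n (fun z => Complex.exp (F z))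
      (fun y => Real.exp (trigSeries fc y)) hGanalytic
      (fun y => by rw [Complex.ofReal_exp, hreF y]) x
    have hcb := aux_cauchy_bound (hGdiff.mono hball)
      (fun z hz => hGb z (hball hz)) n
    rw [← htrans, Complex.norm_real, Real.norm_eq_abs] at hcb
    refine hcb.trans ?_
    have hfac : (0:ℝ) ≤ (n.factorial : ℝ) := by positivity
    have hexpB : Real.exp B ≤ M := by rw [hM_def]; linarith
    have hMn : (1:ℝ) ≤ M ^ n := one_le_pow₀ hM1
    have hM0 : (0:ℝ) ≤ M := by linarith
    calc (n.factorial : ℝ) * Real.exp B ≤ (n.factorial : ℝ) * (M * M ^ n) := by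
          apply mul_le_mul_of_nonneg_left _ hfac
          calc Real.exp B ≤ M := hexpB
            _ = M * 1 := (mul_one M).symm
            _ ≤ M * M ^ n := by gcongr
      _ = M * n.factorial * M ^ n := by ring
end

section
/- Let r > 0 and M₀ > 0, and let c : ℤ → ℂ satisfy |c_k| ≤ M₀ e^{-(r/2)|k|} for all k ∈ ℤ. Then the function f : ℝ → ℂ, f(x) = Σ_{k∈ℤ} c_k e^{ikx}, is well defined (the series converges absolutely) and smooth on ℝ, and for every n ∈ ℕ and every x ∈ ℝ one has |f^{(n)}(x)| ≤ M₁ · n! · (4/r)^n, where M₁ = M₀ (1 + e^{-r/4})/(1 − e^{-r/4}). -/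
open Real Complex

lemma term_hasDerivAt (a c : ℂ) (x : ℝ) :
    HasDerivAt (fun x : ℝ => c * Complex.exp (a * x)) (a * c * Complex.exp (a * x)) x := by
  have h1 : HasDerivAt (fun z : ℂ => Complex.exp (a * z)) (Complex.exp (a * (x : ℂ)) * a) (x : ℂ) :=
    by simpa [Function.comp_def] using (Complex.hasDerivAt_exp (a * (x : ℂ))).comp (x : ℂ) ((hasDerivAt_id ((x : ℂ))).const_mul a)
  have h2 := (h1.const_mul c).comp_ofReal
  convert h2 using 1
  ring

lemma term_iteratedDeriv (a : ℂ) (n : ℕ) : ∀ c : ℂ,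
    iteratedDeriv n (fun x : ℝ => c * Complex.exp (a * x))
      = fun x : ℝ => a ^ n * c * Complex.exp (a * x) := by
  induction n with
  | zero => intro c; simp
  | succ n ih =>
    intro c
    rw [iteratedDeriv_succ']
    have hd : deriv (fun x : ℝ => c * Complex.exp (a * x))
        = fun x : ℝ => (a * c) * Complex.exp (a * x) :=
      funext fun x => (term_hasDerivAt a c x).deriv
    rw [hd, ih (a * c)]
    funext x; ring

lemma term_contDiff (a c : ℂ) : ContDiff ℝ (⊤ : ℕ∞) (fun x : ℝ => c * Complex.exp (a * x)) := by
  apply contDiff_const.mul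
  exact (ContDiff.restrict_scalars ℝ (Complex.contDiff_exp (𝕜 := ℂ))).comp
    (contDiff_const.mul Complex.ofRealCLM.contDiff)

lemma aux_pow_exp (r : ℝ) (hr : 0 < r) (n : ℕ) (t : ℝ) (ht : 0 ≤ t) :
    t ^ n * Real.exp (-(r / 2) * t)
      ≤ (n.factorial : ℝ) * (4 / r) ^ n * Real.exp (-(r / 4) * t) := by
  have h1 : t ^ n ≤ (n.factorial : ℝ) * (4 / r) ^ n * Real.exp ((r / 4) * t) := by
    have h := Real.pow_div_factorial_le_exp (x := (r / 4) * t) (by positivity) n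
    rw [div_le_iff₀ (by positivity : (0:ℝ) < (n.factorial : ℝ))] at h
    have key : t ^ n = ((r / 4) * t) ^ n * (4 / r) ^ n := by
      rw [← mul_pow]
      congr 1
      field_simp
    rw [key]
    calc ((r / 4) * t) ^ n * (4 / r) ^ n
        ≤ (Real.exp ((r / 4) * t) * (n.factorial : ℝ)) * (4 / r) ^ n := by
          gcongr
      _ = (n.factorial : ℝ) * (4 / r) ^ n * Real.exp ((r / 4) * t) := by ring
  calc t ^ n * Real.exp (-(r / 2) * t)
      ≤ ((n.factorial : ℝ) * (4 / r) ^ n * Real.exp ((r / 4) * t)) * Real.exp (-(r / 2) * t) := by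
        apply mul_le_mul_of_nonneg_right h1 (Real.exp_nonneg _)
    _ = (n.factorial : ℝ) * (4 / r) ^ n * Real.exp (-(r / 4) * t) := by
        rw [mul_assoc, ← Real.exp_add]
        ring_nf


/-- Lemma C.1(i)+(ii) in one dimension: if `‖c_k‖ ≤ M₀ e^{-(r/2)|k|}`, then the 2π-periodic
function `f(x) = ∑_{k∈ℤ} c_k e^{ikx}` is well defined (absolutely convergent series), smooth
on `ℝ`, and satisfies `‖f⁽ⁿ⁾(x)‖ ≤ M₁ · n! · (4/r)ⁿ` with
`M₁ = M₀ (1+e^{-r/4})/(1-e^{-r/4})`. -/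
theorem stmt_13 (r M₀ : ℝ) (hr : 0 < r) (hM₀ : 0 < M₀) (c : ℤ → ℂ)
    (hc : ∀ k : ℤ, ‖c k‖ ≤ M₀ * Real.exp (-(r / 2) * |(k : ℝ)|)) :
    (∀ x : ℝ, Summable (fun k : ℤ => ‖c k * Complex.exp (Complex.I * (k : ℂ) * (x : ℂ))‖)) ∧
    ContDiff ℝ (⊤ : ℕ∞)
      (fun x : ℝ => ∑' k : ℤ, c k * Complex.exp (Complex.I * (k : ℂ) * (x : ℂ))) ∧
    ∀ (n : ℕ) (x : ℝ),
      ‖iteratedDeriv n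
          (fun x : ℝ => ∑' k : ℤ, c k * Complex.exp (Complex.I * (k : ℂ) * (x : ℂ))) x‖ ≤
        (M₀ * (1 + Real.exp (-(r / 4))) / (1 - Real.exp (-(r / 4)))) *
          n.factorial * (4 / r) ^ n := by
  have hq0 : 0 < Real.exp (-(r / 4)) := Real.exp_pos _
  have hq1 : Real.exp (-(r / 4)) < 1 := Real.exp_lt_one_iff.mpr (by linarith)
  set q : ℝ := Real.exp (-(r / 4)) with hqdef
  set f : ℤ → ℝ → ℂ := fun k x => c k * Complex.exp (Complex.I * (k : ℂ) * (x : ℂ)) with hfdef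
  have hexp1 : ∀ (k : ℤ) (x : ℝ), ‖Complex.exp (Complex.I * (k : ℂ) * (x : ℂ))‖ = 1 := by
    intro k x
    rw [Complex.norm_exp]
    simp [Complex.mul_re]
  -- summability of the majorant over ℤ
  have hSnat : Summable (fun n : ℕ => q ^ n) := summable_geometric_of_lt_one hq0.le hq1
  have hterm1 : ∀ n : ℕ, Real.exp (-(r / 4) * |((n : ℤ) : ℝ)|) = q ^ n := by
    intro n
    rw [hqdef, ← Real.exp_nat_mul]
    congr 1
    push_cast
    rw [_root_.abs_of_nonneg (by positivity : (0:ℝ) ≤ (n : ℝ))]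
    ring
  have hterm2 : ∀ n : ℕ, Real.exp (-(r / 4) * |((-((n : ℤ) + 1) : ℤ) : ℝ)|) = q * q ^ n := by
    intro n
    rw [hqdef, ← pow_succ', ← Real.exp_nat_mul]
    congr 1
    push_cast
    rw [abs_neg, _root_.abs_of_nonneg (by positivity : (0:ℝ) ≤ (n : ℝ) + 1)]
    ring
  have h1 : Summable (fun n : ℕ => Real.exp (-(r / 4) * |((n : ℤ) : ℝ)|)) :=
    hSnat.congr fun n => (hterm1 n).symm
  have h2 : Summable (fun n : ℕ => Real.exp (-(r / 4) * |((-((n : ℤ) + 1) : ℤ) : ℝ)|)) :=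
    (hSnat.mul_left q).congr fun n => (hterm2 n).symm
  have hS : Summable (fun k : ℤ => Real.exp (-(r / 4) * |(k : ℝ)|)) :=
    Summable.of_nat_of_neg_add_one (f := fun k : ℤ => Real.exp (-(r / 4) * |(k : ℝ)|)) h1 h2
  have hT : ∑' k : ℤ, Real.exp (-(r / 4) * |(k : ℝ)|) = (1 + q) / (1 - q) := by
    rw [tsum_of_nat_of_neg_add_one (f := fun k : ℤ => Real.exp (-(r / 4) * |(k : ℝ)|)) h1 h2]
    have e1 : ∑' n : ℕ, Real.exp (-(r / 4) * |((n : ℤ) : ℝ)|) = (1 - q)⁻¹ :=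
      (tsum_congr hterm1).trans (tsum_geometric_of_lt_one hq0.le hq1)
    have e2 : ∑' n : ℕ, Real.exp (-(r / 4) * |((-((n : ℤ) + 1) : ℤ) : ℝ)|) = q * (1 - q)⁻¹ := by
      rw [tsum_congr hterm2, tsum_mul_left, tsum_geometric_of_lt_one hq0.le hq1]
    rw [e1, e2]
    have h0 : (1 : ℝ) - q ≠ 0 := by linarith
    field_simp
  -- bound on iterated derivatives of the terms
  set v : ℕ → ℤ → ℝ := fun n k =>
    (M₀ * n.factorial * (4 / r) ^ n) * Real.exp (-(r / 4) * |(k : ℝ)|) with hvdef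
  have hv : ∀ n : ℕ, Summable (v n) := fun n => hS.mul_left _
  have h'f : ∀ (n : ℕ) (k : ℤ) (x : ℝ), ‖iteratedFDeriv ℝ n (f k) x‖ ≤ v n k := by
    intro n k x
    rw [norm_iteratedFDeriv_eq_norm_iteratedDeriv]
    have hit := term_iteratedDeriv (Complex.I * (k : ℂ)) n (c k)
    have : iteratedDeriv n (f k) x
        = (Complex.I * (k : ℂ)) ^ n * c k * Complex.exp (Complex.I * (k : ℂ) * (x : ℂ)) := by
      rw [hfdef]
      exact congrFun hit x
    rw [this, norm_mul, norm_mul, norm_pow, hexp1, mul_one]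
    have hIk : ‖Complex.I * (k : ℂ)‖ = |(k : ℝ)| := by
      simp
    rw [hIk]
    calc |(k : ℝ)| ^ n * ‖c k‖
        ≤ |(k : ℝ)| ^ n * (M₀ * Real.exp (-(r / 2) * |(k : ℝ)|)) := by
          gcongr
          exact hc k
      _ = M₀ * (|(k : ℝ)| ^ n * Real.exp (-(r / 2) * |(k : ℝ)|)) := by ring
      _ ≤ M₀ * ((n.factorial : ℝ) * (4 / r) ^ n * Real.exp (-(r / 4) * |(k : ℝ)|)) :=
          mul_le_mul_of_nonneg_left (aux_pow_exp r hr n _ (abs_nonneg _)) hM₀.le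
      _ = v n k := by rw [hvdef]; ring
  have hcd : ∀ k : ℤ, ContDiff ℝ (⊤ : ℕ∞) (f k) := fun k =>
    term_contDiff (Complex.I * (k : ℂ)) (c k)
  refine ⟨?_, ?_, ?_⟩
  · intro x
    refine Summable.of_nonneg_of_le (fun k => norm_nonneg _) ?_ (hS.mul_left M₀)
    intro k
    rw [norm_mul, hexp1, mul_one]
    refine (hc k).trans ?_
    exact mul_le_mul_of_nonneg_left
      (Real.exp_le_exp.mpr (by nlinarith [abs_nonneg ((k : ℝ))])) hM₀.le
  · exact contDiff_tsum hcd (fun n _ => hv n) (fun n k x _ => h'f n k x)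
  · intro n x
    have hiter : iteratedFDeriv ℝ n (fun x : ℝ => ∑' k : ℤ, f k x)
        = fun x : ℝ => ∑' k : ℤ, iteratedFDeriv ℝ n (f k) x :=
      iteratedFDeriv_tsum hcd (fun m _ => hv m) (fun m k x _ => h'f m k x) le_top
    rw [← norm_iteratedFDeriv_eq_norm_iteratedDeriv]
    have hsumm : Summable (fun k : ℤ => ‖iteratedFDeriv ℝ n (f k) x‖) :=
      Summable.of_nonneg_of_le (fun k => norm_nonneg _) (fun k => h'f n k x) (hv n)
    calc ‖iteratedFDeriv ℝ n (fun x : ℝ => ∑' k : ℤ, f k x) x‖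
        = ‖∑' k : ℤ, iteratedFDeriv ℝ n (f k) x‖ := by rw [hiter]
      _ ≤ ∑' k : ℤ, ‖iteratedFDeriv ℝ n (f k) x‖ := norm_tsum_le_tsum_norm hsumm
      _ ≤ ∑' k : ℤ, v n k := Summable.tsum_le_tsum (fun k => h'f n k x) hsumm (hv n)
      _ = (M₀ * n.factorial * (4 / r) ^ n) * ((1 + q) / (1 - q)) := by
          rw [hvdef, tsum_mul_left, hT]
      _ = M₀ * (1 + q) / (1 - q) * n.factorial * (4 / r) ^ n := by ring
end

section
/- Let r > 0. Consider the class B_r of functions f : [0,1] → ℝ of the form f(x) = f₀/√(2π) + (1/√π) Σ_{k≥1} ( f_k cos(kx) + f_{-k} sin(kx) ) with real coefficients satisfying Σ_{k∈ℤ} f_k² e^{r k²} ≤ 1. Then there exist a constant C > 0 and ρ₀ ∈ (0,1), depending only on r, such that for every ρ ∈ (0,ρ₀) there is a finite set T of functions from [0,1] to ℝ with cardinality at most exp(C (log(1/ρ))²) such that every f ∈ B_r satisfies sup_{x∈[0,1]} |f(x) − g(x)| ≤ ρ for some g ∈ T. -/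
lemma sqrt_exp' (x : ℝ) : Real.sqrt (Real.exp x) = Real.exp (x/2) := by
  have h : Real.exp x = (Real.exp (x/2))^2 := by
    rw [sq, ← Real.exp_add]; ring_nf
  rw [h, Real.sqrt_sq (Real.exp_pos _).le]

lemma floor_approx {δ : ℝ} (hδ : 0 < δ) (t : ℝ) : |t - δ * ⌊t/δ⌋| ≤ δ := by
  have h1 : (⌊t/δ⌋ : ℝ) ≤ t/δ := Int.floor_le _
  have h2 : t/δ < ⌊t/δ⌋ + 1 := Int.lt_floor_add_one _
  have h3 : δ * (t/δ) = t := by field_simp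
  rw [abs_le]; constructor <;> nlinarith

noncomputable def gridCoeff (K : ℕ) (δ : ℝ) (j : Fin (2*K+1) → ℤ) (m : ℤ) : ℝ :=
  if h : (m + K).toNat < 2*K+1 then δ * j ⟨(m + K).toNat, h⟩ else 0

noncomputable def gridFun (K : ℕ) (δ : ℝ) (j : Fin (2*K+1) → ℤ) (x : ℝ) : ℝ :=
  gridCoeff K δ j 0 / Real.sqrt (2*Real.pi) + (1/Real.sqrt Real.pi) *
    ∑ k ∈ Finset.range K, (gridCoeff K δ j ((k:ℤ)+1) * Real.cos (((k:ℝ)+1)*x)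
      + gridCoeff K δ j (-((k:ℤ)+1)) * Real.sin (((k:ℝ)+1)*x))

lemma gridCoeff_eq (K : ℕ) (δ : ℝ) (j : Fin (2*K+1) → ℤ) (m : ℤ)
    (h1 : -(K:ℤ) ≤ m) (h2 : m ≤ K) :
    gridCoeff K δ j m = δ * j ⟨(m + K).toNat, by omega⟩ := by
  rw [gridCoeff, dif_pos]

lemma coeff_bound {r : ℝ} (hr : 0 < r) {fc : ℤ → ℝ}
    (hs : Summable (fun k : ℤ => (fc k) ^ 2 * Real.exp (r * (k : ℝ) ^ 2)))
    (h1 : (∑' k : ℤ, (fc k) ^ 2 * Real.exp (r * (k : ℝ) ^ 2)) ≤ 1) (m : ℤ) :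
    |fc m| ≤ Real.exp (-(r * (m:ℝ)^2)/2) := by
  have hm : (fc m)^2 * Real.exp (r*(m:ℝ)^2) ≤ 1 :=
    (hs.le_tsum m (fun j _ => by positivity)).trans h1
  have hE : (0:ℝ) < Real.exp (r*(m:ℝ)^2) := Real.exp_pos _
  have h2 : (fc m)^2 ≤ Real.exp (-(r*(m:ℝ)^2)) := by
    have h2' : (fc m)^2 ≤ 1 / Real.exp (r*(m:ℝ)^2) := (le_div_iff₀ hE).mpr hm
    rwa [Real.exp_neg, ← one_div]
  calc |fc m| = Real.sqrt ((fc m)^2) := (Real.sqrt_sq_eq_abs _).symm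
  _ ≤ Real.sqrt (Real.exp (-(r*(m:ℝ)^2))) := Real.sqrt_le_sqrt h2
  _ = Real.exp (-(r*(m:ℝ)^2)/2) := sqrt_exp' _

set_option maxHeartbeats 8000000 in
/-- Covering-number bound for the unit ball of the RKHS `A_r` of the squared exponential
prior, restricted to `[0,1]`: there are `C > 0` and `ρ₀ ∈ (0,1)` depending only on `r` such
that for every `ρ ∈ (0,ρ₀)` there is a set of at most `exp(C (log(1/ρ))²)` functions that
ρ-covers, in the sup-norm on `[0,1]`, all series with coefficients `∑ f_k² e^{rk²} ≤ 1`. -/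
theorem stmt_14 (r : ℝ) (hr : 0 < r) :
    ∃ C ρ₀ : ℝ, 0 < C ∧ 0 < ρ₀ ∧ ρ₀ < 1 ∧
      ∀ ρ : ℝ, 0 < ρ → ρ < ρ₀ →
        ∃ T : Finset (ℝ → ℝ),
          (T.card : ℝ) ≤ Real.exp (C * (Real.log (1 / ρ)) ^ 2) ∧
          ∀ fc : ℤ → ℝ,
            Summable (fun k : ℤ => (fc k) ^ 2 * Real.exp (r * (k : ℝ) ^ 2)) →
            (∑' k : ℤ, (fc k) ^ 2 * Real.exp (r * (k : ℝ) ^ 2)) ≤ 1 →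
            ∃ g ∈ T, ∀ x ∈ Set.Icc (0 : ℝ) 1, |trigSeries fc x - g x| ≤ ρ := by
  classical
  set q : ℝ := Real.exp (-(r/2)) with hq_def
  have hq0 : 0 < q := Real.exp_pos _
  have hq1 : q < 1 := Real.exp_lt_one_iff.mpr (by linarith)
  set b : ℝ := 1 - q with hb_def
  have hb : 0 < b := by simp only [hb_def]; linarith
  have hb1 : b ≤ 1 := by simp only [hb_def]; linarith
  have hlog4b : 0 < Real.log (4/b) := Real.log_pos (by rw [lt_div_iff₀ hb]; linarith)
  set A : ℝ := (4/r) * Real.log (4/b) + 3 with hA_def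
  set B : ℝ := 4/r with hB_def
  have hA : 0 < A := by positivity
  have hB : 0 < B := by positivity
  set D : ℝ := A + B with hD_def
  have hD : 0 < D := by positivity
  have hlog20 : 0 < Real.log 20 := Real.log_pos (by norm_num)
  have hρ₀1 : Real.exp (-(max A 1)) < 1 :=
    Real.exp_lt_one_iff.mpr (by simp only [neg_lt, neg_zero]; exact lt_of_lt_of_le one_pos (le_max_right A 1))
  refine ⟨D * (Real.log 20 + D + 1), Real.exp (-(max A 1)), by positivity, Real.exp_pos _, hρ₀1, ?_⟩
  intro ρ hρ0 hρρ₀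
  have hρ1 : ρ < 1 := hρρ₀.trans hρ₀1
  set L : ℝ := Real.log (1/ρ) with hL_def
  have hLgt : max A 1 < L := by
    have h := Real.log_lt_log hρ0 hρρ₀
    rw [Real.log_exp] at h
    rw [hL_def, one_div, Real.log_inv]
    linarith
  have hL1 : 1 ≤ L := le_of_lt (lt_of_le_of_lt (le_max_right A 1) hLgt)
  have hLA : A ≤ L := le_of_lt (lt_of_le_of_lt (le_max_left A 1) hLgt)
  have hL0 : 0 < L := by linarith
  -- truncation level
  set y : ℝ := (2/r) * Real.log (4/(b*ρ)) with hy_def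
  have hbρ : 0 < b * ρ := by positivity
  have hbρ1 : b * ρ ≤ 1 := by nlinarith
  have hlogbρ : 0 ≤ Real.log (4/(b*ρ)) := Real.log_nonneg (by rw [le_div_iff₀ hbρ]; linarith)
  have hy0 : 0 ≤ y := by positivity
  set K : ℕ := ⌈y⌉₊ with hK_def
  have hyK : y ≤ K := Nat.le_ceil y
  have hKy : (K:ℝ) < y + 1 := Nat.ceil_lt_add_one hy0
  have hy_eq : y = (2/r) * Real.log (4/b) + (2/r) * L := by
    rw [hy_def, hL_def, show (4:ℝ)/(b*ρ) = (4/b) * (1/ρ) by field_simp,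
      Real.log_mul (by positivity) (by positivity)]
    ring
  have hKtail : Real.exp (-(r * ((K:ℝ)+1))/2) ≤ b*ρ/4 := by
    have h1 : Real.log (4/(b*ρ)) ≤ r * ((K:ℝ)+1)/2 := by
      have : (r/2) * y = Real.log (4/(b*ρ)) := by rw [hy_def]; field_simp
      nlinarith
    calc Real.exp (-(r * ((K:ℝ)+1))/2) ≤ Real.exp (-Real.log (4/(b*ρ))) :=
          Real.exp_le_exp.mpr (by linarith)
    _ = b*ρ/4 := by rw [Real.exp_neg, Real.exp_log (by positivity), inv_div]
  have h2K1 : (2*(K:ℝ)+1) ≤ D * L := by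
    have h3 : 2*y + 3 = A + B * L := by rw [hy_eq, hA_def, hB_def]; ring
    nlinarith
  -- mesh
  set δ : ℝ := ρ / (4*(2*(K:ℝ)+1)) with hδ_def
  have hK1pos : (0:ℝ) < 2*(K:ℝ)+1 := by positivity
  have hδ0 : 0 < δ := by positivity
  have hδρ4 : (2*(K:ℝ)+1) * δ = ρ/4 := by rw [hδ_def]; field_simp
  have hδ1 : δ ≤ 1 := by
    rw [hδ_def, div_le_one (by positivity)]
    nlinarith [Nat.cast_nonneg (α := ℝ) K]
  set N : ℕ := ⌈1/δ⌉₊ with hN_def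
  have hN : 1/δ ≤ (N:ℝ) := Nat.le_ceil _
  have hN1 : (N:ℝ) < 1/δ + 1 := Nat.ceil_lt_add_one (by positivity)
  -- the grid of coefficient vectors and the covering set
  set S : Finset (Fin (2*K+1) → ℤ) :=
    Fintype.piFinset (fun _ => Finset.Icc (-(N:ℤ)) (N:ℤ)) with hS_def
  refine ⟨S.image (fun j => gridFun K δ j), ?_, ?_⟩
  · -- cardinality bound
    have hcard1 : S.card = (2*N+1)^(2*K+1) := by
      rw [hS_def, Fintype.card_piFinset]
      simp [Int.card_Icc]
      congr 1
      omega
    have hP1 : (1:ℝ) ≤ (2*(N:ℝ)+1) := by linarith [Nat.cast_nonneg (α := ℝ) N]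
    have hP0 : (0:ℝ) < (2*(N:ℝ)+1) := by positivity
    have hu1 : 1 ≤ 1/δ := by rw [le_div_iff₀ hδ0]; linarith
    have hPle : (2*(N:ℝ)+1) ≤ 5/δ := by
      have h5 : (5:ℝ)/δ = 5 * (1/δ) := by ring
      nlinarith
    have hlogP : Real.log (2*(N:ℝ)+1) ≤ (Real.log 20 + D + 1) * L := by
      have h1 : (5:ℝ)/δ = 20*(2*(K:ℝ)+1) * (1/ρ) := by
        rw [hδ_def]; field_simp; ring
      have h2 : (2*(N:ℝ)+1) ≤ 20 * (D*L) * (1/ρ) := by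
        rw [h1] at hPle
        have h1ρ : (0:ℝ) ≤ 1/ρ := by positivity
        nlinarith [mul_le_mul_of_nonneg_right h2K1 h1ρ]
      calc Real.log (2*(N:ℝ)+1) ≤ Real.log (20 * (D*L) * (1/ρ)) :=
            Real.log_le_log hP0 h2
      _ = Real.log 20 + Real.log (D*L) + L := by
          rw [Real.log_mul (by positivity) (by positivity),
            Real.log_mul (by positivity) (by positivity), hL_def]
      _ ≤ Real.log 20 + D*L + L := by
          have := Real.log_le_sub_one_of_pos (show (0:ℝ) < D*L by positivity)
          linarith
      _ ≤ (Real.log 20 + D + 1) * L := by nlinarith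
    have hlogP0 : 0 ≤ Real.log (2*(N:ℝ)+1) := Real.log_nonneg hP1
    calc ((S.image (fun j => gridFun K δ j)).card : ℝ)
        ≤ (S.card : ℝ) := by exact_mod_cast Finset.card_image_le
    _ = (2*(N:ℝ)+1)^(2*K+1) := by rw [hcard1]; push_cast; ring
    _ = Real.exp ((2*(K:ℝ)+1) * Real.log (2*(N:ℝ)+1)) := by
        rw [show (2*(K:ℝ)+1) = ((2*K+1 : ℕ) : ℝ) by push_cast; ring,
          Real.exp_nat_mul, Real.exp_log hP0]
    _ ≤ Real.exp (D * (Real.log 20 + D + 1) * L^2) := by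
        apply Real.exp_le_exp.mpr
        calc (2*(K:ℝ)+1) * Real.log (2*(N:ℝ)+1) ≤ (D*L) * ((Real.log 20 + D + 1) * L) :=
              mul_le_mul h2K1 hlogP hlogP0 (by positivity)
        _ = D * (Real.log 20 + D + 1) * L^2 := by ring
  · -- covering property
    intro fc hs h1
    have hcb : ∀ m : ℤ, |fc m| ≤ Real.exp (-(r * (m:ℝ)^2)/2) := coeff_bound hr hs h1
    have hcb1 : ∀ m : ℤ, |fc m| ≤ 1 := by
      intro m
      refine (hcb m).trans (Real.exp_le_one_iff.mpr ?_)
      have : 0 ≤ r * (m:ℝ)^2 := by positivity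
      linarith
    -- the chosen grid point
    set j : Fin (2*K+1) → ℤ := fun i => ⌊ fc ((i:ℤ) - K) / δ ⌋ with hj_def
    have hjS : j ∈ S := by
      rw [hS_def, Fintype.mem_piFinset]
      intro i
      rw [Finset.mem_Icc]
      have habs : |fc ((i:ℤ) - K) / δ| ≤ 1/δ := by
        rw [abs_div, abs_of_pos hδ0]
        gcongr
        exact hcb1 _
      have h1' : fc ((i:ℤ) - K) / δ ≤ (N:ℝ) := le_trans (le_abs_self _) (habs.trans hN)
      have h2' : -(N:ℝ) ≤ fc ((i:ℤ) - K) / δ := by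
        have h4 := neg_abs_le (fc ((i:ℤ) - K) / δ)
        have h5 := neg_le_neg (habs.trans hN)
        linarith
      constructor
      · have h3 := Int.floor_mono h2'
        rw [show (-(N:ℝ)) = ((-(N:ℤ) : ℤ) : ℝ) by push_cast; ring] at h3
        rwa [Int.floor_intCast] at h3
      · have h3 := Int.floor_mono h1'
        rwa [Int.floor_natCast] at h3
    refine ⟨gridFun K δ j, Finset.mem_image_of_mem _ hjS, ?_⟩
    intro x hx
    -- series terms
    set h : ℕ → ℝ := fun k => fc ((k:ℤ)+1) * Real.cos (((k:ℝ)+1)*x) +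
      fc (-((k:ℤ)+1)) * Real.sin (((k:ℝ)+1)*x) with hh_def
    have hqpow : ∀ k : ℕ, Real.exp (-(r/2)) ^ (k+1) = Real.exp (-(r/2) * ((k:ℝ)+1)) := by
      intro k
      rw [← Real.exp_nat_mul]
      push_cast
      ring_nf
    have hterm : ∀ k : ℕ, |h k| ≤ 2 * q^(k+1) := by
      intro k
      have hc1 : |fc ((k:ℤ)+1)| ≤ q^(k+1) := by
        refine (hcb _).trans ?_
        rw [hq_def, hqpow k]
        apply Real.exp_le_exp.mpr
        push_cast
        nlinarith [mul_nonneg hr.le (Nat.cast_nonneg (α := ℝ) k),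
          mul_nonneg (mul_nonneg hr.le (Nat.cast_nonneg (α := ℝ) k)) (Nat.cast_nonneg (α := ℝ) k)]
      have hc2 : |fc (-((k:ℤ)+1))| ≤ q^(k+1) := by
        refine (hcb _).trans ?_
        rw [hq_def, hqpow k]
        apply Real.exp_le_exp.mpr
        push_cast
        nlinarith [mul_nonneg hr.le (Nat.cast_nonneg (α := ℝ) k),
          mul_nonneg (mul_nonneg hr.le (Nat.cast_nonneg (α := ℝ) k)) (Nat.cast_nonneg (α := ℝ) k)]
      calc |h k| ≤ |fc ((k:ℤ)+1) * Real.cos (((k:ℝ)+1)*x)| +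
            |fc (-((k:ℤ)+1)) * Real.sin (((k:ℝ)+1)*x)| := abs_add_le _ _
      _ ≤ q^(k+1) * 1 + q^(k+1) * 1 := by
          rw [abs_mul, abs_mul]
          gcongr <;>
            first
              | exact abs_nonneg _
              | exact hc1
              | exact hc2
              | exact Real.abs_cos_le_one _
              | exact Real.abs_sin_le_one _
      _ = 2 * q^(k+1) := by ring
    have hgeom : Summable (fun k : ℕ => 2 * q^(k+1)) := by
      have hg : Summable (fun k : ℕ => (2*q) * q^k) :=
        (summable_geometric_of_lt_one hq0.le hq1).mul_left _
      refine hg.congr (fun k => by ring)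
    have hsummable : Summable h :=
      Summable.of_norm_bounded hgeom (fun k => by rw [Real.norm_eq_abs]; exact hterm k)
    -- tail bound
    have hqK : q^(K+1) ≤ b*ρ/4 := by
      have hqe : q^(K+1) = Real.exp (-(r * ((K:ℝ)+1))/2) := by
        rw [hq_def, hqpow K]; ring_nf
      rw [hqe]; exact hKtail
    have htail : |∑' k : ℕ, h (k+K)| ≤ ρ/2 := by
      have hb2 : Summable (fun k : ℕ => (2*q^(K+1)) * q^k) :=
        (summable_geometric_of_lt_one hq0.le hq1).mul_left _
      have habs : Summable (fun k : ℕ => |h (k+K)|) := by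
        refine Summable.of_nonneg_of_le (fun k => abs_nonneg _) (fun k => ?_) hb2
        calc |h (k+K)| ≤ 2 * q^((k+K)+1) := hterm (k+K)
        _ = (2*q^(K+1)) * q^k := by rw [pow_add, pow_add]; ring
      have hbinv : b * b⁻¹ = 1 := mul_inv_cancel₀ hb.ne'
      have hbinv0 : 0 ≤ b⁻¹ := by positivity
      calc |∑' k : ℕ, h (k+K)| ≤ ∑' k : ℕ, |h (k+K)| := by
            have hn := norm_tsum_le_tsum_norm (f := fun k : ℕ => h (k+K))
              (by simpa [Real.norm_eq_abs] using habs)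
            simpa [Real.norm_eq_abs] using hn
      _ ≤ ∑' k : ℕ, (2*q^(K+1)) * q^k := by
            refine Summable.tsum_le_tsum (fun k => ?_) habs hb2
            calc |h (k+K)| ≤ 2 * q^((k+K)+1) := hterm (k+K)
            _ = (2*q^(K+1)) * q^k := by rw [pow_add, pow_add]; ring
      _ = (2*q^(K+1)) * (1-q)⁻¹ := by
            rw [tsum_mul_left, tsum_geometric_of_lt_one hq0.le hq1]
      _ ≤ ρ/2 := by
            rw [show (1-q) = b from rfl]
            nlinarith [pow_nonneg hq0.le (K+1)]
    -- grid coefficient approximation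
    have hccfl : ∀ m : ℤ, -(K:ℤ) ≤ m → m ≤ K → gridCoeff K δ j m = δ * ⌊fc m / δ⌋ := by
      intro m hm1 hm2
      rw [gridCoeff_eq K δ j m hm1 hm2]
      congr 2
      rw [hj_def]
      show ⌊fc (((((m + K).toNat : ℕ) : ℤ)) - K) / δ⌋ = ⌊fc m / δ⌋
      rw [show ((((m + (K:ℤ)).toNat : ℕ) : ℤ)) - K = m by omega]
    have happrox : ∀ m : ℤ, -(K:ℤ) ≤ m → m ≤ K → |fc m - gridCoeff K δ j m| ≤ δ := by
      intro m hm1 hm2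
      rw [hccfl m hm1 hm2]
      exact floor_approx hδ0 (fc m)
    -- split the series and compare
    set hc : ℕ → ℝ := fun k => gridCoeff K δ j ((k:ℤ)+1) * Real.cos (((k:ℝ)+1)*x)
      + gridCoeff K δ j (-((k:ℤ)+1)) * Real.sin (((k:ℝ)+1)*x) with hhc_def
    have hgf : gridFun K δ j x = gridCoeff K δ j 0 / Real.sqrt (2*Real.pi)
        + (1/Real.sqrt Real.pi) * ∑ k ∈ Finset.range K, hc k := rfl
    have hts : trigSeries fc x = fc 0 / Real.sqrt (2*Real.pi)
        + (1/Real.sqrt Real.pi) * ((∑ k ∈ Finset.range K, h k) + ∑' k : ℕ, h (k+K)) := by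
      have hts0 : trigSeries fc x = fc 0 / Real.sqrt (2*Real.pi)
          + (1/Real.sqrt Real.pi) * ∑' k : ℕ, h k := rfl
      rw [hts0, ← Summable.sum_add_tsum_nat_add K hsummable]
    have hdiff : trigSeries fc x - gridFun K δ j x
        = (fc 0 - gridCoeff K δ j 0) / Real.sqrt (2*Real.pi)
          + (1/Real.sqrt Real.pi) * ((∑ k ∈ Finset.range K, (h k - hc k)) + ∑' k : ℕ, h (k+K)) := by
      rw [hts, hgf, Finset.sum_sub_distrib]
      ring
    have hsq2pi : 1 ≤ Real.sqrt (2*Real.pi) := by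
      rw [show (1:ℝ) = Real.sqrt 1 from (Real.sqrt_one).symm]
      exact Real.sqrt_le_sqrt (by nlinarith [Real.pi_gt_three])
    have hsqpi : 1 ≤ Real.sqrt Real.pi := by
      rw [show (1:ℝ) = Real.sqrt 1 from (Real.sqrt_one).symm]
      exact Real.sqrt_le_sqrt (by nlinarith [Real.pi_gt_three])
    have e0 : |fc 0 - gridCoeff K δ j 0| ≤ δ := happrox 0 (by omega) (by omega)
    have eterm : ∀ k ∈ Finset.range K, |h k - hc k| ≤ 2*δ := by
      intro k hk
      rw [Finset.mem_range] at hk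
      have e1 : |fc ((k:ℤ)+1) - gridCoeff K δ j ((k:ℤ)+1)| ≤ δ := happrox _ (by omega) (by omega)
      have e2 : |fc (-((k:ℤ)+1)) - gridCoeff K δ j (-((k:ℤ)+1))| ≤ δ := happrox _ (by omega) (by omega)
      have hsplit : h k - hc k
          = (fc ((k:ℤ)+1) - gridCoeff K δ j ((k:ℤ)+1)) * Real.cos (((k:ℝ)+1)*x)
            + (fc (-((k:ℤ)+1)) - gridCoeff K δ j (-((k:ℤ)+1))) * Real.sin (((k:ℝ)+1)*x) := by
        rw [hh_def, hhc_def]; ring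
      rw [hsplit]
      calc _ ≤ |(fc ((k:ℤ)+1) - gridCoeff K δ j ((k:ℤ)+1)) * Real.cos (((k:ℝ)+1)*x)|
            + |(fc (-((k:ℤ)+1)) - gridCoeff K δ j (-((k:ℤ)+1))) * Real.sin (((k:ℝ)+1)*x)| := abs_add_le _ _
      _ ≤ δ * 1 + δ * 1 := by
          rw [abs_mul, abs_mul]
          gcongr <;>
            first
              | exact abs_nonneg _
              | exact e1
              | exact e2
              | exact Real.abs_cos_le_one _
              | exact Real.abs_sin_le_one _
      _ = 2*δ := by ring
    have esum : |∑ k ∈ Finset.range K, (h k - hc k)| ≤ (K:ℝ) * (2*δ) := by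
      calc |∑ k ∈ Finset.range K, (h k - hc k)| ≤ ∑ k ∈ Finset.range K, |h k - hc k| :=
            Finset.abs_sum_le_sum_abs _ _
      _ ≤ (Finset.range K).card • (2*δ) := Finset.sum_le_card_nsmul _ _ _ eterm
      _ = (K:ℝ) * (2*δ) := by rw [Finset.card_range, nsmul_eq_mul]
    rw [hdiff]
    have p1 : |(fc 0 - gridCoeff K δ j 0) / Real.sqrt (2*Real.pi)| ≤ δ := by
      rw [abs_div, abs_of_nonneg (le_trans zero_le_one hsq2pi)]
      calc _ ≤ |fc 0 - gridCoeff K δ j 0| := div_le_self (abs_nonneg _) hsq2pi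
      _ ≤ δ := e0
    have p2 : |(1/Real.sqrt Real.pi) * ((∑ k ∈ Finset.range K, (h k - hc k)) + ∑' k : ℕ, h (k+K))|
        ≤ (K:ℝ)*(2*δ) + ρ/2 := by
      rw [abs_mul, abs_of_nonneg (by positivity : (0:ℝ) ≤ 1/Real.sqrt Real.pi)]
      have hin : |(∑ k ∈ Finset.range K, (h k - hc k)) + ∑' k : ℕ, h (k+K)|
          ≤ (K:ℝ)*(2*δ) + ρ/2 := (abs_add_le _ _).trans (add_le_add esum htail)
      have hfr : (1:ℝ)/Real.sqrt Real.pi ≤ 1 := by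
        rw [div_le_one (lt_of_lt_of_le one_pos hsqpi)]; exact hsqpi
      calc (1/Real.sqrt Real.pi) * |(∑ k ∈ Finset.range K, (h k - hc k)) + ∑' k : ℕ, h (k+K)|
          ≤ 1 * ((K:ℝ)*(2*δ) + ρ/2) := by
            apply mul_le_mul hfr hin (abs_nonneg _) one_pos.le
      _ = (K:ℝ)*(2*δ) + ρ/2 := one_mul _
    have hring : (2*(K:ℝ)+1)*δ = (K:ℝ)*(2*δ) + δ := by ring
    calc |(fc 0 - gridCoeff K δ j 0) / Real.sqrt (2*Real.pi)
          + (1/Real.sqrt Real.pi) * ((∑ k ∈ Finset.range K, (h k - hc k)) + ∑' k : ℕ, h (k+K))|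
        ≤ |(fc 0 - gridCoeff K δ j 0) / Real.sqrt (2*Real.pi)|
          + |(1/Real.sqrt Real.pi) * ((∑ k ∈ Finset.range K, (h k - hc k)) + ∑' k : ℕ, h (k+K))| :=
          abs_add_le _ _
    _ ≤ δ + ((K:ℝ)*(2*δ) + ρ/2) := add_le_add p1 p2
    _ ≤ ρ := by linarith
end
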